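/- There do not exist four nondegenerate triangles in the plane, with pairwise disjoint interiors, such that every pair of them shares a common edge (i.e., the dual graph of a pure 2-dimensional simplicial complex in ℝ² contains no K₄). -/

import Mathlib

open scoped Classical
open Set

local notation "E" => EuclideanSpace ℝ (Fin 2)

lemma span3_top {p : Fin 3 → E} (h : AffineIndependent ℝ p) :
    affineSpan ℝ (Set.range p) = ⊤ := by
  rw [h.affineSpan_eq_top_iff_card_eq_finrank_add_one]
  simp [finrank_euclideanSpace_fin]

noncomputable def mkB (p : Fin 3 → E) (h : AffineIndependent ℝ p) : AffineBasis (Fin 3) ℝ E :=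
  ⟨p, h, span3_top h⟩

@[simp] lemma mkB_apply (p : Fin 3 → E) (h) (i : Fin 3) : mkB p h i = p i := rfl

/-- change of coordinate lemma -/
lemma coordM (B C : AffineBasis (Fin 3) ℝ E)
    (h0 : B 0 = C 0) (h1 : B 1 = C 1) (x : E) :
    C.coord 2 x = C.coord 2 (B 2) * B.coord 2 x := by
  conv_lhs => rw [← B.affineCombination_coord_eq_self x]
  rw [Finset.map_affineCombination _ _ _ (B.sum_coord_apply_eq_one x),
    Finset.univ.affineCombination_eq_linear_combination _ _ (B.sum_coord_apply_eq_one x),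
    Fin.sum_univ_three]
  simp only [Function.comp_apply, h0, h1, smul_eq_mul]
  rw [C.coord_apply_ne (by decide), C.coord_apply_ne (by decide)]
  ring



lemma oppSide (B C : AffineBasis (Fin 3) ℝ E)
    (h0 : B 0 = C 0) (h1 : B 1 = C 1)
    (hd : Disjoint (interior (convexHull ℝ (Set.range ⇑B)))
      (interior (convexHull ℝ (Set.range ⇑C)))) :
    B.coord 2 (C 2) < 0 := by
  set p : E := C 2 with hp
  set t : ℝ := B.coord 2 p with hts
  have hst : C.coord 2 (B 2) * t = 1 := by
    have := coordM B C h0 h1 p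
    rwa [C.coord_apply_eq, eq_comm] at this
  have ht0 : t ≠ 0 := by
    intro h; rw [h, mul_zero] at hst; norm_num at hst
  rcases ht0.lt_or_gt with h | h
  · exact h
  exfalso
  set u : ℝ := B.coord 0 p with hu
  set v : ℝ := B.coord 1 p with hv
  obtain ⟨ε, hε0, hε14, hεu, hεv⟩ :
      ∃ ε : ℝ, 0 < ε ∧ ε ≤ 1/4 ∧ ε * |u| ≤ 1/4 ∧ ε * |v| ≤ 1/4 := by
    refine ⟨1/(4*(1+|u|+|v|)), by positivity, ?_, ?_, ?_⟩
    · rw [div_le_iff₀ (by positivity)]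
      nlinarith [abs_nonneg u, abs_nonneg v]
    · rw [div_mul_eq_mul_div, div_le_iff₀ (by positivity)]
      nlinarith [abs_nonneg u, abs_nonneg v]
    · rw [div_mul_eq_mul_div, div_le_iff₀ (by positivity)]
      nlinarith [abs_nonneg u, abs_nonneg v]
  have hε1 : ε < 1 := lt_of_le_of_lt hε14 (by norm_num)
  have hu6 : -(ε * |u|) ≤ ε * u := by
    have h' := mul_le_mul_of_nonneg_left (neg_abs_le u) hε0.le
    rw [mul_neg] at h'
    exact h'
  have hv6 : -(ε * |v|) ≤ ε * v := by
    have h' := mul_le_mul_of_nonneg_left (neg_abs_le v) hε0.le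
    rw [mul_neg] at h'
    exact h'
  set m : E := midpoint ℝ (B 0) (B 1) with hm
  set x : E := AffineMap.lineMap m p ε with hx
  have keyB : ∀ i : Fin 3, B.coord i x = B.coord i m + ε * (B.coord i p - B.coord i m) := by
    intro i
    rw [hx, AffineMap.apply_lineMap]
    simp [AffineMap.lineMap_apply_module]
    ring
  have keyC : ∀ i : Fin 3, C.coord i x = C.coord i m + ε * (C.coord i p - C.coord i m) := by
    intro i
    rw [hx, AffineMap.apply_lineMap]
    simp [AffineMap.lineMap_apply_module]
    ring
  have hBm0 : B.coord 0 m = 1/2 := by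
    rw [hm, AffineMap.map_midpoint, B.coord_apply_eq, B.coord_apply_ne (by decide)]
    norm_num [midpoint_eq_smul_add]
  have hBm1 : B.coord 1 m = 1/2 := by
    rw [hm, AffineMap.map_midpoint, B.coord_apply_eq, B.coord_apply_ne (by decide)]
    norm_num [midpoint_eq_smul_add]
  have hBm2 : B.coord 2 m = 0 := by
    rw [hm, AffineMap.map_midpoint, B.coord_apply_ne (by decide),
      B.coord_apply_ne (by decide)]
    norm_num [midpoint_eq_smul_add]
  have hm' : m = midpoint ℝ (C 0) (C 1) := by rw [hm, h0, h1]
  have hCm0 : C.coord 0 m = 1/2 := by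
    rw [hm', AffineMap.map_midpoint, C.coord_apply_eq, C.coord_apply_ne (by decide)]
    norm_num [midpoint_eq_smul_add]
  have hCm1 : C.coord 1 m = 1/2 := by
    rw [hm', AffineMap.map_midpoint, C.coord_apply_eq, C.coord_apply_ne (by decide)]
    norm_num [midpoint_eq_smul_add]
  have hCm2 : C.coord 2 m = 0 := by
    rw [hm', AffineMap.map_midpoint, C.coord_apply_ne (by decide),
      C.coord_apply_ne (by decide)]
    norm_num [midpoint_eq_smul_add]
  have hxB : x ∈ interior (convexHull ℝ (Set.range ⇑B)) := by
    rw [B.interior_convexHull]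
    intro i
    fin_cases i
    · show (0:ℝ) < B.coord 0 x
      rw [keyB 0, hBm0, ← hu]
      linarith [hu6, hεu, hε14, hε0]
    · show (0:ℝ) < B.coord 1 x
      rw [keyB 1, hBm1, ← hv]
      linarith [hv6, hεv, hε14, hε0]
    · show (0:ℝ) < B.coord 2 x
      rw [keyB 2, hBm2, ← hts]
      linarith [mul_pos hε0 h]
  have hxC : x ∈ interior (convexHull ℝ (Set.range ⇑C)) := by
    rw [C.interior_convexHull]
    have hp0 : C.coord 0 p = 0 := C.coord_apply_ne (by decide)
    have hp1 : C.coord 1 p = 0 := C.coord_apply_ne (by decide)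
    have hp2 : C.coord 2 p = 1 := C.coord_apply_eq 2
    intro i
    fin_cases i
    · show (0:ℝ) < C.coord 0 x
      rw [keyC 0, hCm0, hp0]; linarith
    · show (0:ℝ) < C.coord 1 x
      rw [keyC 1, hCm1, hp1]; linarith
    · show (0:ℝ) < C.coord 2 x
      rw [keyC 2, hCm2, hp2]; linarith
  exact Set.disjoint_left.mp hd hxB hxC

/-- A nondegenerate triangle in the plane, given by its vertex set. -/
def IsTriangle (V : Finset (EuclideanSpace ℝ (Fin 2))) : Prop :=
  V.card = 3 ∧ AffineIndependent ℝ (fun x : V => (x : EuclideanSpace ℝ (Fin 2)))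

/-- Two triangles share an edge: they have exactly 2 common vertices and their
intersection is the convex hull of those common vertices. -/
def SharesEdge (V W : Finset (EuclideanSpace ℝ (Fin 2))) : Prop :=
  (V ∩ W).card = 2 ∧
    convexHull ℝ (V : Set (EuclideanSpace ℝ (Fin 2))) ∩
        convexHull ℝ (W : Set (EuclideanSpace ℝ (Fin 2))) =
      convexHull ℝ ((V ∩ W : Finset (EuclideanSpace ℝ (Fin 2))) : Set (EuclideanSpace ℝ (Fin 2)))

lemma range_vec3 (a b c : E) : Set.range ![a, b, c] = ({a, b, c} : Set E) := by
  ext x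
  constructor
  · rintro ⟨i, rfl⟩
    fin_cases i <;> simp
  · rintro (rfl | rfl | rfl)
    exacts [⟨0, rfl⟩, ⟨1, rfl⟩, ⟨2, rfl⟩]

lemma vec3_inj {a b c : E} (hab : a ≠ b) (hac : a ≠ c) (hbc : b ≠ c) :
    Function.Injective ![a, b, c] := by
  intro i j hij
  fin_cases i <;> fin_cases j <;> first
    | rfl
    | (exfalso; revert hij; simp [hab, hac, hbc, hab.symm, hac.symm, hbc.symm])

lemma triangle_affInd {V : Finset E} (hT : IsTriangle V) {a b c : E}
    (hab : a ≠ b) (hac : a ≠ c) (hbc : b ≠ c) (hV : V = {a, b, c}) :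
    AffineIndependent ℝ ![a, b, c] := by
  have hmem : ∀ i : Fin 3, ![a, b, c] i ∈ V := by
    intro i; fin_cases i <;> simp [hV]
  let f : Fin 3 ↪ V := ⟨fun i => ⟨![a, b, c] i, hmem i⟩,
    fun i j h => vec3_inj hab hac hbc (congrArg Subtype.val h)⟩
  have h2 := hT.2.comp_embedding f
  convert h2 using 1
  funext i; fin_cases i <;> rfl

lemma pair_struct {V W : Finset E} (hV : V.card = 3) (hW : W.card = 3)
    (hVW : (V ∩ W).card = 2) :
    ∃ x y z w : E, x ≠ y ∧ z ∉ W ∧ w ∉ V ∧ V = {x, y, z} ∧ W = {x, y, w} := by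
  obtain ⟨x, y, hxy, hI⟩ := Finset.card_eq_two.mp hVW
  have hsubV : ({x, y} : Finset E) ⊆ V := hI ▸ Finset.inter_subset_left
  have hsubW : ({x, y} : Finset E) ⊆ W := hI ▸ Finset.inter_subset_right
  have hcxy : ({x, y} : Finset E).card = 2 := Finset.card_pair hxy
  have hcV : (V \ {x, y}).card = 1 := by
    rw [Finset.card_sdiff_of_subset hsubV, hV, hcxy]
  have hcW : (W \ {x, y}).card = 1 := by
    rw [Finset.card_sdiff_of_subset hsubW, hW, hcxy]
  obtain ⟨z, hz⟩ := Finset.card_eq_one.mp hcV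
  obtain ⟨w, hw⟩ := Finset.card_eq_one.mp hcW
  have hzmem : z ∈ V \ ({x, y} : Finset E) := by rw [hz]; exact Finset.mem_singleton_self z
  have hwmem : w ∈ W \ ({x, y} : Finset E) := by rw [hw]; exact Finset.mem_singleton_self w
  rw [Finset.mem_sdiff] at hzmem hwmem
  refine ⟨x, y, z, w, hxy, ?_, ?_, ?_, ?_⟩
  · intro hzW
    have : z ∈ V ∩ W := Finset.mem_inter.mpr ⟨hzmem.1, hzW⟩
    rw [hI] at this
    exact hzmem.2 this
  · intro hwV
    have : w ∈ V ∩ W := Finset.mem_inter.mpr ⟨hwV, hwmem.1⟩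
    rw [hI] at this
    exact hwmem.2 this
  · have h1 : V = {x, y} ∪ V \ {x, y} := (Finset.union_sdiff_of_subset hsubV).symm
    rw [hz] at h1
    rw [h1]
    ext t
    simp only [Finset.mem_union, Finset.mem_insert, Finset.mem_singleton]
    tauto
  · have h1 : W = {x, y} ∪ W \ {x, y} := (Finset.union_sdiff_of_subset hsubW).symm
    rw [hw] at h1
    rw [h1]
    ext t
    simp only [Finset.mem_union, Finset.mem_insert, Finset.mem_singleton]
    tauto

lemma range_mkB (p : Fin 3 → E) (h : AffineIndependent ℝ p) :
    Set.range ⇑(mkB p h) = Set.range p := rfl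

lemma case_shared_edge (a b c p q : E)
    (hB : AffineIndependent ℝ ![a, b, c])
    (hC : AffineIndependent ℝ ![a, b, p])
    (hD : AffineIndependent ℝ ![a, b, q])
    (d1 : Disjoint (interior (convexHull ℝ ({a, b, c} : Set E)))
      (interior (convexHull ℝ ({a, b, p} : Set E))))
    (d2 : Disjoint (interior (convexHull ℝ ({a, b, c} : Set E)))
      (interior (convexHull ℝ ({a, b, q} : Set E))))
    (d3 : Disjoint (interior (convexHull ℝ ({a, b, p} : Set E)))
      (interior (convexHull ℝ ({a, b, q} : Set E)))) : False := by
  set B := mkB ![a, b, c] hB with hBdef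
  set C := mkB ![a, b, p] hC with hCdef
  set D := mkB ![a, b, q] hD with hDdef
  have hrB : Set.range ⇑B = ({a, b, c} : Set E) := by rw [hBdef, range_mkB, range_vec3]
  have hrC : Set.range ⇑C = ({a, b, p} : Set E) := by rw [hCdef, range_mkB, range_vec3]
  have hrD : Set.range ⇑D = ({a, b, q} : Set E) := by rw [hDdef, range_mkB, range_vec3]
  have h1 : B.coord 2 (C 2) < 0 := oppSide B C rfl rfl (by rw [hrB, hrC]; exact d1)
  have h2 : B.coord 2 (D 2) < 0 := oppSide B D rfl rfl (by rw [hrB, hrD]; exact d2)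
  have h3 : C.coord 2 (D 2) < 0 := oppSide C D rfl rfl (by rw [hrC, hrD]; exact d3)
  have key : C.coord 2 (B 2) * B.coord 2 (C 2) = 1 := by
    have hm := coordM B C rfl rfl (C 2)
    rw [C.coord_apply_eq] at hm
    exact hm.symm
  have key2 : C.coord 2 (D 2) = C.coord 2 (B 2) * B.coord 2 (D 2) := coordM B C rfl rfl (D 2)
  have hs : C.coord 2 (B 2) < 0 := by nlinarith
  have : 0 < C.coord 2 (D 2) := by rw [key2]; exact mul_pos_of_neg_of_neg hs h2
  linarith

def rot3 : Fin 3 ≃ Fin 3 where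
  toFun := ![2, 0, 1]
  invFun := ![1, 2, 0]
  left_inv := by decide
  right_inv := by decide

def swap12 : Fin 3 ≃ Fin 3 where
  toFun := ![0, 2, 1]
  invFun := ![0, 2, 1]
  left_inv := by decide
  right_inv := by decide

lemma case_fan (a b c p : E)
    (hB : AffineIndependent ℝ ![a, b, c])
    (h1 : AffineIndependent ℝ ![b, c, p])
    (h2 : AffineIndependent ℝ ![a, c, p])
    (h3 : AffineIndependent ℝ ![a, b, p])
    (d1 : Disjoint (interior (convexHull ℝ ({a, b, c} : Set E)))
      (interior (convexHull ℝ ({b, c, p} : Set E))))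
    (d2 : Disjoint (interior (convexHull ℝ ({a, b, c} : Set E)))
      (interior (convexHull ℝ ({a, c, p} : Set E))))
    (d3 : Disjoint (interior (convexHull ℝ ({a, b, c} : Set E)))
      (interior (convexHull ℝ ({a, b, p} : Set E)))) : False := by
  set B := mkB ![a, b, c] hB with hBdef
  have hrB : Set.range ⇑B = ({a, b, c} : Set E) := by rw [hBdef, range_mkB, range_vec3]
  have hrB1 : Set.range ⇑(B.reindex rot3) = ({a, b, c} : Set E) := by
    rw [← hrB]
    rw [AffineBasis.coe_reindex]
    exact rot3.symm.surjective.range_comp _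
  have hrB2 : Set.range ⇑(B.reindex swap12) = ({a, b, c} : Set E) := by
    rw [← hrB]
    rw [AffineBasis.coe_reindex]
    exact swap12.symm.surjective.range_comp _
  have k3 : B.coord 2 p < 0 := by
    have := oppSide B (mkB ![a, b, p] h3) rfl rfl
      (by rw [hrB, range_mkB, range_vec3]; exact d3)
    exact this
  have k1 : B.coord 0 p < 0 := by
    have := oppSide (B.reindex rot3) (mkB ![b, c, p] h1) rfl rfl
      (by rw [hrB1, range_mkB, range_vec3]; exact d1)
    rwa [AffineBasis.coord_reindex] at this
  have k2 : B.coord 1 p < 0 := by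
    have := oppSide (B.reindex swap12) (mkB ![a, c, p] h2) rfl rfl
      (by rw [hrB2, range_mkB, range_vec3]; exact d2)
    rwa [AffineBasis.coord_reindex] at this
  have hsum := B.sum_coord_apply_eq_one p
  rw [Fin.sum_univ_three] at hsum
  linarith

lemma coe3 (x y z : E) : (({x, y, z} : Finset E) : Set E) = ({x, y, z} : Set E) := by
  simp

lemma tri_pair (u v w : E) : ({u, v, w} : Finset E) = {u, v} ∪ {w} := by
  ext t
  simp only [Finset.mem_insert, Finset.mem_singleton, Finset.mem_union]
  tauto

lemma eq_pair_of {V0 : Finset E} {x y z u v : E}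
    (h0 : V0 = {x, y, z}) (h0' : V0 = {u, v, z})
    (hzx : z ≠ x) (hzy : z ≠ y) (hzu : z ≠ u) (hzv : z ≠ v) :
    ({x, y} : Finset E) = {u, v} := by
  have hmem : ∀ t : E, t ∈ V0 ↔ (t = x ∨ t = y ∨ t = z) := by
    intro t; rw [h0]; simp
  have hmem' : ∀ t : E, t ∈ V0 ↔ (t = u ∨ t = v ∨ t = z) := by
    intro t; rw [h0']; simp
  ext t
  simp only [Finset.mem_insert, Finset.mem_singleton]
  constructor
  · rintro (rfl | rfl)
    · rcases (hmem' t).mp ((hmem t).mpr (Or.inl rfl)) with h | h | h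
      · exact Or.inl h
      · exact Or.inr h
      · exact absurd h.symm hzx
    · rcases (hmem' t).mp ((hmem t).mpr (Or.inr (Or.inl rfl))) with h | h | h
      · exact Or.inl h
      · exact Or.inr h
      · exact absurd h.symm hzy
  · rintro (rfl | rfl)
    · rcases (hmem t).mp ((hmem' t).mpr (Or.inl rfl)) with h | h | h
      · exact Or.inl h
      · exact Or.inr h
      · exact absurd h.symm hzu
    · rcases (hmem t).mp ((hmem' t).mpr (Or.inr (Or.inl rfl))) with h | h | h
      · exact Or.inl h
      · exact Or.inr h
      · exact absurd h.symm hzv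

lemma resolve_pair {V0 Vi Vj : Finset E}
    (hT0 : IsTriangle V0) (hTi : IsTriangle Vi) (hTj : IsTriangle Vj)
    {x y z wi x' y' wj : E}
    (hxy : x ≠ y)
    (hzi : z ∉ Vi) (hzj : z ∉ Vj) (hwi : wi ∉ V0) (hwj : wj ∉ V0)
    (h0 : V0 = {x, y, z}) (h0' : V0 = {x', y', z})
    (hVi : Vi = {x, y, wi}) (hVj : Vj = {x', y', wj})
    (d1 : Disjoint (interior (convexHull ℝ (V0 : Set E)))
      (interior (convexHull ℝ (Vi : Set E))))
    (d2 : Disjoint (interior (convexHull ℝ (V0 : Set E)))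
      (interior (convexHull ℝ (Vj : Set E))))
    (d3 : Disjoint (interior (convexHull ℝ (Vi : Set E)))
      (interior (convexHull ℝ (Vj : Set E)))) : False := by
  have hxVi : x ∈ Vi := by rw [hVi]; simp
  have hyVi : y ∈ Vi := by rw [hVi]; simp
  have hx'Vj : x' ∈ Vj := by rw [hVj]; simp
  have hy'Vj : y' ∈ Vj := by rw [hVj]; simp
  have hxV0 : x ∈ V0 := by rw [h0]; simp
  have hyV0 : y ∈ V0 := by rw [h0]; simp
  have hzV0 : z ∈ V0 := by rw [h0]; simp
  have hzx : z ≠ x := fun h => hzi (h ▸ hxVi)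
  have hzy : z ≠ y := fun h => hzi (h ▸ hyVi)
  have hzx' : z ≠ x' := fun h => hzj (h ▸ hx'Vj)
  have hzy' : z ≠ y' := fun h => hzj (h ▸ hy'Vj)
  have hedge : ({x', y'} : Finset E) = {x, y} := eq_pair_of h0' h0 hzx' hzy' hzx hzy
  have hVj' : Vj = {x, y, wj} := by
    rw [hVj, tri_pair, hedge, ← tri_pair]
  have hwix : wi ≠ x := fun h => hwi (h ▸ hxV0)
  have hwiy : wi ≠ y := fun h => hwi (h ▸ hyV0)
  have hwjx : wj ≠ x := fun h => hwj (h ▸ hxV0)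
  have hwjy : wj ≠ y := fun h => hwj (h ▸ hyV0)
  have A0 := triangle_affInd hT0 hxy hzx.symm hzy.symm h0
  have Ai := triangle_affInd hTi hxy hwix.symm hwiy.symm hVi
  have Aj := triangle_affInd hTj hxy hwjx.symm hwjy.symm hVj'
  refine case_shared_edge x y z wi wj A0 Ai Aj ?_ ?_ ?_
  · rw [← coe3, ← coe3, ← h0, ← hVi]; exact d1
  · rw [← coe3, ← coe3, ← h0, ← hVj']; exact d2
  · rw [← coe3, ← coe3, ← hVi, ← hVj']; exact d3

/-- There are no four nondegenerate triangles in the plane with pairwise disjoint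
interiors such that every pair of them shares a common edge: the dual graph of a pure
2-dimensional simplicial complex in `ℝ²` contains no `K₄`. -/
theorem no_K4 :
    ¬ ∃ V : Fin 4 → Finset (EuclideanSpace ℝ (Fin 2)),
      (∀ i, IsTriangle (V i)) ∧
      (∀ i j, i ≠ j →
        Disjoint (interior (convexHull ℝ (V i : Set (EuclideanSpace ℝ (Fin 2)))))
          (interior (convexHull ℝ (V j : Set (EuclideanSpace ℝ (Fin 2)))))) ∧
      (∀ i j, i ≠ j → SharesEdge (V i) (V j)) := by
  rintro ⟨V, hT, hD, hS⟩
  have hc : ∀ i, (V i).card = 3 := fun i => (hT i).1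
  obtain ⟨x1, y1, z1, w1, hxy1, hz1, hw1, hV01, hV1⟩ :=
    pair_struct (hc 0) (hc 1) (hS 0 1 (by decide)).1
  obtain ⟨x2, y2, z2, w2, hxy2, hz2, hw2, hV02, hV2⟩ :=
    pair_struct (hc 0) (hc 2) (hS 0 2 (by decide)).1
  obtain ⟨x3, y3, z3, w3, hxy3, hz3, hw3, hV03, hV3⟩ :=
    pair_struct (hc 0) (hc 3) (hS 0 3 (by decide)).1
  by_cases h12 : z1 = z2
  · exact resolve_pair (hT 0) (hT 1) (hT 2) hxy1 hz1 (h12 ▸ hz2) hw1 hw2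
      hV01 (h12 ▸ hV02) hV1 hV2
      (hD 0 1 (by decide)) (hD 0 2 (by decide)) (hD 1 2 (by decide))
  by_cases h13 : z1 = z3
  · exact resolve_pair (hT 0) (hT 1) (hT 3) hxy1 hz1 (h13 ▸ hz3) hw1 hw3
      hV01 (h13 ▸ hV03) hV1 hV3
      (hD 0 1 (by decide)) (hD 0 3 (by decide)) (hD 1 3 (by decide))
  by_cases h23 : z2 = z3
  · exact resolve_pair (hT 0) (hT 2) (hT 3) hxy2 hz2 (h23 ▸ hz3) hw2 hw3
      hV02 (h23 ▸ hV03) hV2 hV3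
      (hD 0 2 (by decide)) (hD 0 3 (by decide)) (hD 2 3 (by decide))
  -- all three missing vertices distinct
  have mz1 : z1 ∈ V 0 := by rw [hV01]; simp
  have mz2 : z2 ∈ V 0 := by rw [hV02]; simp
  have mz3 : z3 ∈ V 0 := by rw [hV03]; simp
  have hcz : ({z1, z2, z3} : Finset E).card = 3 := by
    rw [Finset.card_insert_of_notMem (by simp [h12, h13]),
      Finset.card_insert_of_notMem (by simp [h23]), Finset.card_singleton]
  have hV0z : V 0 = {z1, z2, z3} := by
    refine (Finset.eq_of_subset_of_card_le ?_ ?_).symm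
    · intro t ht
      simp only [Finset.mem_insert, Finset.mem_singleton] at ht
      rcases ht with rfl | rfl | rfl
      exacts [mz1, mz2, mz3]
    · rw [hc 0, hcz]
  -- identify the shared edges
  have hz1x1 : z1 ≠ x1 := fun h => hz1 (h ▸ (by rw [hV1]; simp : x1 ∈ V 1))
  have hz1y1 : z1 ≠ y1 := fun h => hz1 (h ▸ (by rw [hV1]; simp : y1 ∈ V 1))
  have hz2x2 : z2 ≠ x2 := fun h => hz2 (h ▸ (by rw [hV2]; simp : x2 ∈ V 2))
  have hz2y2 : z2 ≠ y2 := fun h => hz2 (h ▸ (by rw [hV2]; simp : y2 ∈ V 2))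
  have hz3x3 : z3 ≠ x3 := fun h => hz3 (h ▸ (by rw [hV3]; simp : x3 ∈ V 3))
  have hz3y3 : z3 ≠ y3 := fun h => hz3 (h ▸ (by rw [hV3]; simp : y3 ∈ V 3))
  have hV0z1 : V 0 = {z2, z3, z1} := by
    rw [hV0z]; ext t; simp; tauto
  have hV0z2 : V 0 = {z1, z3, z2} := by
    rw [hV0z]; ext t; simp; tauto
  have hV0z3 : V 0 = {z1, z2, z3} := hV0z
  have e1 : ({x1, y1} : Finset E) = {z2, z3} := eq_pair_of hV01 hV0z1 hz1x1 hz1y1 h12 h13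
  have e2 : ({x2, y2} : Finset E) = {z1, z3} :=
    eq_pair_of hV02 hV0z2 hz2x2 hz2y2 (fun h => h12 h.symm) h23
  have e3 : ({x3, y3} : Finset E) = {z1, z2} :=
    eq_pair_of hV03 hV0z3 hz3x3 hz3y3 (fun h => h13 h.symm) (fun h => h23 h.symm)
  have hV1' : V 1 = {z2, z3, w1} := by rw [hV1, tri_pair, e1, ← tri_pair]
  have hV2' : V 2 = {z1, z3, w2} := by rw [hV2, tri_pair, e2, ← tri_pair]
  have hV3' : V 3 = {z1, z2, w3} := by rw [hV3, tri_pair, e3, ← tri_pair]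
  have hw1z1 : w1 ≠ z1 := fun h => hw1 (h ▸ mz1)
  have hw1z2 : w1 ≠ z2 := fun h => hw1 (h ▸ mz2)
  have hw1z3 : w1 ≠ z3 := fun h => hw1 (h ▸ mz3)
  have hw2z1 : w2 ≠ z1 := fun h => hw2 (h ▸ mz1)
  have hw2z2 : w2 ≠ z2 := fun h => hw2 (h ▸ mz2)
  have hw2z3 : w2 ≠ z3 := fun h => hw2 (h ▸ mz3)
  have hw3z1 : w3 ≠ z1 := fun h => hw3 (h ▸ mz1)
  have hw3z3 : w3 ≠ z3 := fun h => hw3 (h ▸ mz3)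
  have hw3z2 : w3 ≠ z2 := fun h => hw3 (h ▸ mz2)
  -- the opposite vertices coincide
  have hw12 : w1 = w2 := by
    by_contra hne
    have hsub : V 1 ∩ V 2 ⊆ {z3} := by
      intro t ht
      rw [Finset.mem_inter, hV1', hV2'] at ht
      simp only [Finset.mem_insert, Finset.mem_singleton] at ht ⊢
      obtain ⟨h1t, h2t⟩ := ht
      rcases h1t with rfl | rfl | rfl
      · rcases h2t with h | h | h
        · exact absurd h (fun h' => h12 h'.symm)
        · exact absurd h h23
        · exact absurd h.symm hw2z2
      · rfl
      · rcases h2t with h | h | h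
        · exact absurd h hw1z1
        · exact absurd h hw1z3
        · exact absurd h hne
    have hcle : (V 1 ∩ V 2).card ≤ 1 :=
      le_trans (Finset.card_le_card hsub) (by simp)
    rw [(hS 1 2 (by decide)).1] at hcle
    omega
  have hw13 : w1 = w3 := by
    by_contra hne
    have hsub : V 1 ∩ V 3 ⊆ {z2} := by
      intro t ht
      rw [Finset.mem_inter, hV1', hV3'] at ht
      simp only [Finset.mem_insert, Finset.mem_singleton] at ht ⊢
      obtain ⟨h1t, h2t⟩ := ht
      rcases h1t with rfl | rfl | rfl
      · rfl
      · rcases h2t with h | h | h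
        · exact absurd h (fun h' => h13 h'.symm)
        · exact absurd h (fun h' => h23 h'.symm)
        · exact absurd h.symm hw3z3
      · rcases h2t with h | h | h
        · exact absurd h hw1z1
        · exact absurd h hw1z2
        · exact absurd h hne
    have hcle : (V 1 ∩ V 3).card ≤ 1 :=
      le_trans (Finset.card_le_card hsub) (by simp)
    rw [(hS 1 3 (by decide)).1] at hcle
    omega
  -- final configuration
  have A0 := triangle_affInd (hT 0) h12 h13 h23 hV0z
  have A1 := triangle_affInd (hT 1) h23 hw1z2.symm hw1z3.symm hV1'
  have A2 := triangle_affInd (hT 2) h13 hw1z1.symm hw1z3.symm (hw12 ▸ hV2')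
  have A3 := triangle_affInd (hT 3) h12 hw1z1.symm hw1z2.symm (hw13 ▸ hV3')
  refine case_fan z1 z2 z3 w1 A0 A1 A2 A3 ?_ ?_ ?_
  · rw [← coe3, ← coe3, ← hV0z, ← hV1']
    exact hD 0 1 (by decide)
  · rw [← coe3, ← coe3, ← hV0z, ← (hw12 ▸ hV2' : V 2 = {z1, z3, w1})]
    exact hD 0 2 (by decide)
  · rw [← coe3, ← coe3, ← hV0z, ← (hw13 ▸ hV3' : V 3 = {z1, z2, w1})]
    exact hD 0 3 (by decide)
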